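/- Let V = H¹(0,L) or V = H¹_{(0}(0,L). For every m > 0 there exists a constant C > 0 such that for all L > 0 and all real κ > 0 with L·κ ≥ m the following holds, where f is any square-integrable complex-valued function on (0,L): (a) if q₁ ∈ V satisfies a¹ᴰ_κ(q₁,w) = ∫₀ᴸ f·conj(w) dt for all w ∈ V, then ‖q₁‖_{1,κ} ≤ C·κ⁻¹·‖f‖_{L²(0,L)}; (b) if q₂ ∈ V satisfies a¹ᴰ_κ(q₂,w) = ∫₀ᴸ f·conj(w') dt for all w ∈ V, then ‖q₂‖_{1,κ} ≤ C·‖f‖_{L²(0,L)}. -/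

import Mathlib

open MeasureTheory
open scoped ENNReal

lemma memLp_star {μ : Measure ℝ} {v : ℝ → ℂ} (hv : MemLp v 2 μ) :
    MemLp (fun t => star (v t)) 2 μ := by
  refine ⟨continuous_star.comp_aestronglyMeasurable hv.1, ?_⟩
  rw [show (fun t => star (v t)) = ⇑(starRingEnd ℂ) ∘ v from rfl]
  exact (eLpNorm_conj v 2 μ).trans_lt hv.2

lemma cs_aux {μ : Measure ℝ} {u v : ℝ → ℂ} (hu : MemLp u 2 μ) (hv : MemLp v 2 μ) :
    ‖∫ t, u t * star (v t) ∂μ‖ ≤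
      Real.sqrt (∫ t, ‖u t‖ ^ 2 ∂μ) * Real.sqrt (∫ t, ‖v t‖ ^ 2 ∂μ) := by
  have h2 : (2 : ℝ≥0∞) = ENNReal.ofReal (2:ℝ) := by norm_num
  have hconj : Real.HolderConjugate 2 2 := Real.HolderConjugate.two_two
  have key := integral_mul_norm_le_Lp_mul_Lq (μ := μ) hconj (h2 ▸ hu) (h2 ▸ memLp_star hv)
  calc ‖∫ t, u t * star (v t) ∂μ‖ ≤ ∫ t, ‖u t * star (v t)‖ ∂μ :=
        norm_integral_le_integral_norm _
    _ = ∫ t, ‖u t‖ * ‖star (v t)‖ ∂μ := by simp_rw [norm_mul]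
    _ ≤ (∫ t, ‖u t‖ ^ (2:ℝ) ∂μ) ^ (1/(2:ℝ)) * (∫ t, ‖star (v t)‖ ^ (2:ℝ) ∂μ) ^ (1/(2:ℝ)) := key
    _ = Real.sqrt (∫ t, ‖u t‖ ^ 2 ∂μ) * Real.sqrt (∫ t, ‖v t‖ ^ 2 ∂μ) := by
        simp_rw [norm_star, show (2:ℝ) = ((2:ℕ):ℝ) by norm_num, Real.rpow_natCast,
          Real.sqrt_eq_rpow]
        norm_num

lemma re_self_int {μ : Measure ℝ} (u : ℝ → ℂ) :
    (∫ t, u t * star (u t) ∂μ) = ((∫ t, ‖u t‖ ^ 2 ∂μ : ℝ) : ℂ) := by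
  have : ∀ t, u t * star (u t) = ((‖u t‖ ^ 2 : ℝ) : ℂ) := by
    intro t
    rw [show star (u t) = (starRingEnd ℂ) (u t) from rfl, Complex.mul_conj,
      Complex.normSq_eq_norm_sq]
  simp_rw [this]
  exact integral_ofReal (𝕜 := ℂ)


/-- A function in `H¹(0,L)`: a pair `(toFun, deriv)` where `toFun` is continuous on `[0,L]`,
`deriv` is square-integrable on `(0,L)`, and `toFun x = toFun 0 + ∫₀ˣ deriv` on `[0,L]`. -/
structure H1 (L : ℝ) where
  toFun : ℝ → ℂ
  deriv : ℝ → ℂ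
  continuousOn : ContinuousOn toFun (Set.Icc 0 L)
  memLp_deriv : MemLp deriv 2 (volume.restrict (Set.Ioo 0 L))
  eq_intderiv : ∀ x ∈ Set.Icc 0 L, toFun x = toFun 0 + ∫ t in (0:ℝ)..x, deriv t

/-- The sesquilinear form
`a¹ᴰ_κ(u,v) = ∫₀ᴸ u' conj(v') + κ² ∫₀ᴸ u conj(v) + κ u(L) conj(v(L))`. -/
noncomputable def a1D (L : ℝ) (κ : ℂ) (u v : H1 L) : ℂ :=
  (∫ t in Set.Ioo (0:ℝ) L, u.deriv t * star (v.deriv t)) +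
    κ ^ 2 * (∫ t in Set.Ioo (0:ℝ) L, u.toFun t * star (v.toFun t)) +
    κ * u.toFun L * star (v.toFun L)

/-- The weighted `H¹` norm `‖u‖²_{1,s} = ‖u'‖²_{L²(0,L)} + s² ‖u‖²_{L²(0,L)}`. -/
noncomputable def h1Norm (L : ℝ) (s : ℝ) (u : H1 L) : ℝ :=
  Real.sqrt ((∫ t in Set.Ioo (0:ℝ) L, ‖u.deriv t‖ ^ 2) +
    s ^ 2 * ∫ t in Set.Ioo (0:ℝ) L, ‖u.toFun t‖ ^ 2)

/-- The `L²(0,L)` norm. -/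
noncomputable def l2Norm (L : ℝ) (f : ℝ → ℂ) : ℝ :=
  Real.sqrt (∫ t in Set.Ioo (0:ℝ) L, ‖f t‖ ^ 2)

lemma memLp_toFun {L : ℝ} (q : H1 L) : MemLp q.toFun 2 (volume.restrict (Set.Ioo 0 L)) := by
  haveI : Fact (volume (Set.Ioo (0:ℝ) L) < ⊤) := ⟨measure_Ioo_lt_top⟩
  obtain ⟨M, hM⟩ := (isCompact_Icc (a := (0:ℝ)) (b := L)).exists_bound_of_continuousOn
    q.continuousOn
  exact MemLp.of_bound
    ((q.continuousOn.mono Set.Ioo_subset_Icc_self).aestronglyMeasurable measurableSet_Ioo) M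
    ((ae_restrict_iff' measurableSet_Ioo).2
      (ae_of_all _ fun x hx => hM x (Set.Ioo_subset_Icc_self hx)))

lemma re_a1D_self {L κ : ℝ} (q : H1 L) :
    (a1D L (κ:ℂ) q q).re =
      (∫ t in Set.Ioo (0:ℝ) L, ‖q.deriv t‖ ^ 2) +
        κ ^ 2 * (∫ t in Set.Ioo (0:ℝ) L, ‖q.toFun t‖ ^ 2) + κ * ‖q.toFun L‖ ^ 2 := by
  have e3 : (κ:ℂ) * q.toFun L * star (q.toFun L) = ((κ * ‖q.toFun L‖ ^ 2 : ℝ) : ℂ) := by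
    rw [mul_assoc, show star (q.toFun L) = (starRingEnd ℂ) (q.toFun L) from rfl,
      Complex.mul_conj, Complex.normSq_eq_norm_sq]
    norm_cast
  rw [a1D, re_self_int, re_self_int, e3]
  norm_cast

lemma h1_est {L κ : ℝ} (hκ : 0 < κ) (q : H1 L) (c : ℝ) (hc : 0 ≤ c)
    (h : (a1D L (κ:ℂ) q q).re ≤ c * h1Norm L κ q) : h1Norm L κ q ≤ c := by
  have hA : 0 ≤ ∫ t in Set.Ioo (0:ℝ) L, ‖q.deriv t‖ ^ 2 :=
    integral_nonneg fun t => sq_nonneg _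
  have hB : 0 ≤ ∫ t in Set.Ioo (0:ℝ) L, ‖q.toFun t‖ ^ 2 :=
    integral_nonneg fun t => sq_nonneg _
  set N := h1Norm L κ q with hN
  have hN0 : 0 ≤ N := Real.sqrt_nonneg _
  have hNsq : N ^ 2 = (∫ t in Set.Ioo (0:ℝ) L, ‖q.deriv t‖ ^ 2) +
      κ ^ 2 * ∫ t in Set.Ioo (0:ℝ) L, ‖q.toFun t‖ ^ 2 :=
    Real.sq_sqrt (by positivity)
  have hre := re_a1D_self (κ := κ) q
  have hle : N ^ 2 ≤ c * N := by
    rw [hNsq]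
    have : 0 ≤ κ * ‖q.toFun L‖ ^ 2 := by positivity
    linarith [hre ▸ h]
  rcases hN0.eq_or_lt with h0 | h0
  · linarith
  · exact le_of_mul_le_mul_right (by nlinarith) h0

/-- For `V = H¹(0,L)` (`zeroBC = false`) or `V = H¹_{(0}(0,L)`
(`zeroBC = true`) and every `m > 0` there is `C > 0` such that for all `L > 0` and all
real `κ > 0` with `L κ ≥ m`:
(a) a solution `q₁ ∈ V` of `a¹ᴰ_κ(q₁,w) = (f,w)` for all `w ∈ V` satisfies
`‖q₁‖_{1,κ} ≤ C κ⁻¹ ‖f‖`;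
(b) a solution `q₂ ∈ V` of `a¹ᴰ_κ(q₂,w) = (f,w')` for all `w ∈ V` satisfies
`‖q₂‖_{1,κ} ≤ C ‖f‖`. -/
theorem stability_a1D_real (zeroBC : Bool) (m : ℝ) (hm : 0 < m) :
    ∃ C : ℝ, 0 < C ∧
      ∀ L : ℝ, 0 < L → ∀ κ : ℝ, 0 < κ → m ≤ L * κ →
        ∀ f : ℝ → ℂ, MemLp f 2 (volume.restrict (Set.Ioo (0:ℝ) L)) →
          (∀ q₁ : H1 L, (zeroBC = true → q₁.toFun 0 = 0) →
            (∀ w : H1 L, (zeroBC = true → w.toFun 0 = 0) →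
              a1D L (κ : ℂ) q₁ w = ∫ t in Set.Ioo (0:ℝ) L, f t * star (w.toFun t)) →
            h1Norm L κ q₁ ≤ C * κ⁻¹ * l2Norm L f) ∧
          (∀ q₂ : H1 L, (zeroBC = true → q₂.toFun 0 = 0) →
            (∀ w : H1 L, (zeroBC = true → w.toFun 0 = 0) →
              a1D L (κ : ℂ) q₂ w = ∫ t in Set.Ioo (0:ℝ) L, f t * star (w.deriv t)) →
            h1Norm L κ q₂ ≤ C * l2Norm L f) := by
  refine ⟨1, one_pos, fun L hL κ hκ hm' f hf => ⟨?_, ?_⟩⟩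
  · intro q hq0 heq
    rw [one_mul]
    have hq2 := memLp_toFun q
    have hl2 : 0 ≤ l2Norm L f := Real.sqrt_nonneg _
    refine h1_est hκ q _ (by positivity) ?_
    rw [heq q hq0]
    calc (∫ t in Set.Ioo (0:ℝ) L, f t * star (q.toFun t)).re
        ≤ ‖∫ t in Set.Ioo (0:ℝ) L, f t * star (q.toFun t)‖ := Complex.re_le_norm _
      _ ≤ l2Norm L f * Real.sqrt (∫ t in Set.Ioo (0:ℝ) L, ‖q.toFun t‖ ^ 2) := cs_aux hf hq2
      _ ≤ l2Norm L f * (κ⁻¹ * h1Norm L κ q) := by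
          refine mul_le_mul_of_nonneg_left ?_ hl2
          have hA : 0 ≤ ∫ t in Set.Ioo (0:ℝ) L, ‖q.deriv t‖ ^ 2 :=
            integral_nonneg fun t => sq_nonneg _
          have hB : 0 ≤ ∫ t in Set.Ioo (0:ℝ) L, ‖q.toFun t‖ ^ 2 :=
            integral_nonneg fun t => sq_nonneg _
          have h1 : (∫ t in Set.Ioo (0:ℝ) L, ‖q.toFun t‖ ^ 2) ≤
              (κ⁻¹ * h1Norm L κ q) ^ 2 := by
            have hNsq : (h1Norm L κ q) ^ 2 = (∫ t in Set.Ioo (0:ℝ) L, ‖q.deriv t‖ ^ 2) +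
                κ ^ 2 * ∫ t in Set.Ioo (0:ℝ) L, ‖q.toFun t‖ ^ 2 :=
              Real.sq_sqrt (by positivity)
            have hκ2 : (0:ℝ) < κ ^ 2 := by positivity
            rw [mul_pow, hNsq, inv_pow, inv_mul_eq_div, le_div_iff₀ hκ2]
            nlinarith
          calc Real.sqrt (∫ t in Set.Ioo (0:ℝ) L, ‖q.toFun t‖ ^ 2)
              ≤ Real.sqrt ((κ⁻¹ * h1Norm L κ q) ^ 2) := Real.sqrt_le_sqrt h1
            _ = κ⁻¹ * h1Norm L κ q := Real.sqrt_sq (mul_nonneg (by positivity) (Real.sqrt_nonneg _))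
      _ = κ⁻¹ * l2Norm L f * h1Norm L κ q := by ring
  · intro q hq0 heq
    rw [one_mul]
    have hq2 := q.memLp_deriv
    have hl2 : 0 ≤ l2Norm L f := Real.sqrt_nonneg _
    refine h1_est hκ q _ hl2 ?_
    rw [heq q hq0]
    calc (∫ t in Set.Ioo (0:ℝ) L, f t * star (q.deriv t)).re
        ≤ ‖∫ t in Set.Ioo (0:ℝ) L, f t * star (q.deriv t)‖ := Complex.re_le_norm _
      _ ≤ l2Norm L f * Real.sqrt (∫ t in Set.Ioo (0:ℝ) L, ‖q.deriv t‖ ^ 2) := cs_aux hf hq2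
      _ ≤ l2Norm L f * h1Norm L κ q := by
          refine mul_le_mul_of_nonneg_left ?_ hl2
          have hB : 0 ≤ ∫ t in Set.Ioo (0:ℝ) L, ‖q.toFun t‖ ^ 2 :=
            integral_nonneg fun t => sq_nonneg _
          refine Real.sqrt_le_sqrt ?_
          nlinarith [sq_nonneg κ]
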